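/- Let (X,Y,A) be finitely-valued random variables and let A'₁,…,A'_k be variables such that each (X,Y,A'_i) has the same distribution as (X,Y,A), and A'₁,…,A'_k, A are mutually conditionally independent given (X,Y). Then H(A'₁,…,A'_k | X) ≤ k·H(A|X) and H(A'₁,…,A'_k | X,Y) = k·H(A|X,Y); consequently I(A'₁,…,A'_k : Y | X) ≤ k·I(A:Y|X). -/

import Mathlib

open scoped BigOperators

namespace PaperIngleton

open Classical in
/-- Probability of an event under a pmf `p` on a finite sample space. -/
noncomputable def prob {Ω : Type*} [Fintype Ω] (p : Ω → ℝ) (E : Ω → Prop) : ℝ :=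
  ∑ ω, if E ω then p ω else 0

/-- Shannon entropy of a finitely-valued random variable `X` under pmf `p`. -/
noncomputable def ent {Ω S : Type*} [Fintype Ω] [Fintype S] (p : Ω → ℝ) (X : Ω → S) : ℝ :=
  -∑ s : S, prob p (fun ω => X ω = s) * Real.log (prob p (fun ω => X ω = s))

/-- Conditional entropy `H(X|Y)`. -/
noncomputable def condEnt {Ω S T : Type*} [Fintype Ω] [Fintype S] [Fintype T]
    (p : Ω → ℝ) (X : Ω → S) (Y : Ω → T) : ℝ :=
  ent p (fun ω => (X ω, Y ω)) - ent p Y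

/-- Mutual information `I(X:Y)`. -/
noncomputable def mi {Ω S T : Type*} [Fintype Ω] [Fintype S] [Fintype T]
    (p : Ω → ℝ) (X : Ω → S) (Y : Ω → T) : ℝ :=
  ent p X + ent p Y - ent p (fun ω => (X ω, Y ω))

/-- Conditional mutual information `I(X:Y|Z)`. -/
noncomputable def cmi {Ω S T U : Type*} [Fintype Ω] [Fintype S] [Fintype T] [Fintype U]
    (p : Ω → ℝ) (X : Ω → S) (Y : Ω → T) (Z : Ω → U) : ℝ :=
  ent p (fun ω => (X ω, Z ω)) + ent p (fun ω => (Y ω, Z ω))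
    - ent p (fun ω => (X ω, Y ω, Z ω)) - ent p Z

end PaperIngleton

namespace PaperIngleton

section Helpers

variable {Ω : Type} [Fintype Ω]

lemma prob_congr {p : Ω → ℝ} {E E' : Ω → Prop} (h : ∀ ω, E ω ↔ E' ω) :
    prob p E = prob p E' := by
  have : E = E' := funext fun ω => propext (h ω)
  rw [this]

lemma prob_nonneg {p : Ω → ℝ} (hp : ∀ ω, 0 ≤ p ω) (E : Ω → Prop) : 0 ≤ prob p E := by
  unfold prob
  apply Finset.sum_nonneg
  intro ω _
  split
  · exact hp ω
  · exact le_rfl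

lemma prob_mono {p : Ω → ℝ} (hp : ∀ ω, 0 ≤ p ω) {E E' : Ω → Prop}
    (h : ∀ ω, E ω → E' ω) : prob p E ≤ prob p E' := by
  unfold prob
  apply Finset.sum_le_sum
  intro ω _
  split_ifs with h1 h2
  · exact le_rfl
  · exact absurd (h ω h1) h2
  · exact hp ω
  · exact le_rfl

lemma prob_sum_and {β : Type} [Fintype β] (p : Ω → ℝ) (E : Ω → Prop) (G : Ω → β) :
    ∑ b, prob p (fun ω => E ω ∧ G ω = b) = prob p E := by
  classical
  unfold prob
  rw [Finset.sum_comm]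
  refine Finset.sum_congr rfl fun ω _ => ?_
  by_cases h : E ω <;> simp [h]

lemma sum_prob_eq (p : Ω → ℝ) (hp1 : ∑ ω, p ω = 1) {α : Type} [Fintype α] (F : Ω → α) :
    ∑ a, prob p (fun ω => F ω = a) = 1 := by
  classical
  unfold prob
  rw [Finset.sum_comm]
  simpa using hp1

lemma prob_zero_of_not {p : Ω → ℝ} {E : Ω → Prop} (h : ∀ ω, ¬ E ω) : prob p E = 0 := by
  unfold prob
  refine Finset.sum_eq_zero fun ω _ => ?_
  rw [if_neg (h ω)]

lemma sum_prob_filter (p : Ω → ℝ) {α γ : Type} [Fintype α] (F : Ω → α) (φ : α → γ) (c : γ) :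
    haveI := Classical.propDecidable
    ∑ a ∈ Finset.univ.filter (fun a => φ a = c), prob p (fun ω => F ω = a)
      = prob p (fun ω => φ (F ω) = c) := by
  classical
  rw [← prob_sum_and p (fun ω => φ (F ω) = c) F, Finset.sum_filter]
  refine Finset.sum_congr rfl fun a _ => ?_
  by_cases h : φ a = c
  · rw [if_pos h]
    refine prob_congr fun ω => ?_
    constructor
    · exact fun hF => ⟨hF ▸ h, hF⟩
    · exact fun hF => hF.2
  · rw [if_neg h]
    symm
    apply prob_zero_of_not
    rintro ω ⟨h1, h2⟩
    exact h (h2 ▸ h1)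

lemma cross_ent (p : Ω → ℝ) {α γ : Type} [Fintype α] [Fintype γ] (F : Ω → α) (φ : α → γ) :
    ∑ a, prob p (fun ω => F ω = a) * Real.log (prob p (fun ω => φ (F ω) = φ a))
      = -ent p (fun ω => φ (F ω)) := by
  classical
  rw [ent, neg_neg]
  rw [← Finset.sum_fiberwise_of_maps_to (fun a (_ : a ∈ Finset.univ) => Finset.mem_univ (φ a))
      (fun a => prob p (fun ω => F ω = a) * Real.log (prob p (fun ω => φ (F ω) = φ a)))]
  refine Finset.sum_congr rfl fun c _ => ?_
  have : ∀ a ∈ Finset.univ.filter (fun a => φ a = c),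
      prob p (fun ω => F ω = a) * Real.log (prob p (fun ω => φ (F ω) = φ a))
        = prob p (fun ω => F ω = a) * Real.log (prob p (fun ω => φ (F ω) = c)) := by
    intro a ha
    rw [(Finset.mem_filter.mp ha).2]
  rw [Finset.sum_congr rfl this, ← Finset.sum_mul, sum_prob_filter p F φ c]

lemma gibbs {α : Type} [Fintype α] (r q : α → ℝ) (hr : ∀ a, 0 ≤ r a)
    (hr1 : ∑ a, r a = 1) (hq : ∀ a, 0 ≤ q a) (hq1 : ∑ a, q a ≤ 1)
    (hpos : ∀ a, 0 < r a → 0 < q a) :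
    -∑ a, r a * Real.log (r a) ≤ -∑ a, r a * Real.log (q a) := by
  have key : ∀ a, r a * Real.log (q a) - r a * Real.log (r a) ≤ q a - r a := by
    intro a
    rcases eq_or_lt_of_le (hr a) with h | h
    · rw [← h]
      simpa using hq a
    · have hqa := hpos a h
      have hlog : Real.log (q a) - Real.log (r a) ≤ q a / r a - 1 := by
        rw [← Real.log_div (ne_of_gt hqa) (ne_of_gt h)]
        exact Real.log_le_sub_one_of_pos (div_pos hqa h)
      have := mul_le_mul_of_nonneg_left hlog (le_of_lt h)
      calc r a * Real.log (q a) - r a * Real.log (r a)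
        = r a * (Real.log (q a) - Real.log (r a)) := by ring
      _ ≤ r a * (q a / r a - 1) := this
      _ = q a - r a := by field_simp
  have hsum := Finset.sum_le_sum (fun a (_ : a ∈ Finset.univ) => key a)
  rw [Finset.sum_sub_distrib, Finset.sum_sub_distrib, hr1] at hsum
  linarith

lemma ent_congr {α : Type} [Fintype α] {p : Ω → ℝ} {F G : Ω → α}
    (h : ∀ s, prob p (fun ω => F ω = s) = prob p (fun ω => G ω = s)) :
    ent p F = ent p G := by
  unfold ent
  exact congrArg _ (Finset.sum_congr rfl fun s _ => by rw [h s])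


lemma ent_comp_inj {α β : Type} [Fintype α] [Fintype β] (p : Ω → ℝ) (F : Ω → α)
    (φ : α → β) (hφ : Function.Injective φ) :
    ent p (fun ω => φ (F ω)) = ent p F := by
  classical
  unfold ent
  congr 1
  rw [← Finset.sum_subset (Finset.subset_univ (Finset.univ.image φ))]
  · rw [Finset.sum_image (fun a _ b _ h => hφ h)]
    refine Finset.sum_congr rfl fun a _ => ?_
    have : prob p (fun ω => φ (F ω) = φ a) = prob p (fun ω => F ω = a) :=
      prob_congr fun ω => hφ.eq_iff
    rw [this]
  · intro b _ hb
    have : prob p (fun ω => φ (F ω) = b) = 0 := by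
      apply prob_zero_of_not
      intro ω hω
      exact hb (Finset.mem_image.mpr ⟨F ω, Finset.mem_univ _, hω⟩)
    rw [this]
    simp

end Helpers


set_option linter.unusedSectionVars false
set_option linter.unusedVariables false

section Core

variable {Ω V U : Type} [Fintype Ω] [Fintype V] [Fintype U]

/-- Comparison distribution: product of pair marginals divided by the appropriate
power of the marginal of `Z`. -/
noncomputable def Q (p : Ω → ℝ) (k : ℕ) (A' : Fin k → Ω → U) (Z : Ω → V)
    (a : (Fin k → U) × V) : ℝ :=
  if prob p (fun ω => Z ω = a.2) = 0 then 0
  else (∏ i, prob p (fun ω => (A' i ω, Z ω) = (a.1 i, a.2)))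
        * prob p (fun ω => Z ω = a.2) / prob p (fun ω => Z ω = a.2) ^ k

variable (p : Ω → ℝ) (k : ℕ) (A' : Fin k → Ω → U) (Z : Ω → V)

lemma Q_nonneg (hp : ∀ ω, 0 ≤ p ω) (a : (Fin k → U) × V) : 0 ≤ Q p k A' Z a := by
  unfold Q
  split
  · exact le_rfl
  · apply div_nonneg
    · exact mul_nonneg (Finset.prod_nonneg fun i _ => prob_nonneg hp _) (prob_nonneg hp _)
    · exact pow_nonneg (prob_nonneg hp _) k

lemma sum_prob_pair (hp : ∀ ω, 0 ≤ p ω) (i : Fin k) (z : V) :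
    ∑ u, prob p (fun ω => (A' i ω, Z ω) = (u, z)) = prob p (fun ω => Z ω = z) := by
  rw [← prob_sum_and p (fun ω => Z ω = z) (A' i)]
  refine Finset.sum_congr rfl fun u _ => prob_congr fun ω => ?_
  rw [Prod.ext_iff]
  exact ⟨fun h => ⟨h.2, h.1⟩, fun h => ⟨h.2, h.1⟩⟩

lemma Q_sum_le (hp : ∀ ω, 0 ≤ p ω) (hp1 : ∑ ω, p ω = 1) :
    ∑ a, Q p k A' Z a ≤ 1 := by
  classical
  rw [Fintype.sum_prod_type_right]
  have hbd : ∀ z : V, ∑ as : Fin k → U, Q p k A' Z (as, z) ≤ prob p (fun ω => Z ω = z) := by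
    intro z
    by_cases h : prob p (fun ω => Z ω = z) = 0
    · rw [Finset.sum_eq_zero (fun as _ => ?_)]
      · exact prob_nonneg hp _
      · unfold Q
        rw [if_pos h]
    · have heq : ∀ as : Fin k → U, Q p k A' Z (as, z)
          = (∏ i, prob p (fun ω => (A' i ω, Z ω) = (as i, z)))
            * prob p (fun ω => Z ω = z) / prob p (fun ω => Z ω = z) ^ k := by
        intro as
        unfold Q
        rw [if_neg h]
      rw [Finset.sum_congr rfl fun as _ => heq as, ← Finset.sum_div, ← Finset.sum_mul]
      have hs : ∑ as : Fin k → U, ∏ i, prob p (fun ω => (A' i ω, Z ω) = (as i, z))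
          = prob p (fun ω => Z ω = z) ^ k := by
        have hps := Finset.prod_univ_sum (fun _ : Fin k => (Finset.univ : Finset U))
          (fun i u => prob p fun ω => (A' i ω, Z ω) = (u, z))
        rw [Fintype.piFinset_univ] at hps
        rw [← hps]
        rw [Finset.prod_congr rfl fun i _ => sum_prob_pair p k A' Z hp i z]
        exact Finset.prod_const _ |>.trans (by rw [Finset.card_univ, Fintype.card_fin])
      rw [hs, mul_comm, mul_div_assoc, div_self (pow_ne_zero k h), mul_one]
  calc ∑ z, ∑ as : Fin k → U, Q p k A' Z (as, z) ≤ ∑ z, prob p (fun ω => Z ω = z) :=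
        Finset.sum_le_sum fun z _ => hbd z
    _ = 1 := sum_prob_eq p hp1 Z

lemma r_le_ri (hp : ∀ ω, 0 ≤ p ω) (a : (Fin k → U) × V) (i : Fin k) :
    prob p (fun ω => (fun j => A' j ω, Z ω) = a)
      ≤ prob p (fun ω => (A' i ω, Z ω) = (a.1 i, a.2)) := by
  refine prob_mono hp fun ω h => ?_
  rw [Prod.ext_iff] at h ⊢
  exact ⟨by rw [← h.1], h.2⟩

lemma r_le_rz (hp : ∀ ω, 0 ≤ p ω) (a : (Fin k → U) × V) :
    prob p (fun ω => (fun j => A' j ω, Z ω) = a) ≤ prob p (fun ω => Z ω = a.2) := by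
  refine prob_mono hp fun ω h => ?_
  rw [Prod.ext_iff] at h
  exact h.2

lemma Q_pos (hp : ∀ ω, 0 ≤ p ω) (a : (Fin k → U) × V)
    (h : 0 < prob p (fun ω => (fun j => A' j ω, Z ω) = a)) : 0 < Q p k A' Z a := by
  have hz : 0 < prob p (fun ω => Z ω = a.2) := lt_of_lt_of_le h (r_le_rz p k A' Z hp a)
  unfold Q
  rw [if_neg (ne_of_gt hz)]
  apply div_pos
  · exact mul_pos (Finset.prod_pos fun i _ => lt_of_lt_of_le h (r_le_ri p k A' Z hp a i)) hz
  · exact pow_pos hz k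

lemma crossQ (hp : ∀ ω, 0 ≤ p ω) :
    -∑ a, prob p (fun ω => (fun j => A' j ω, Z ω) = a) * Real.log (Q p k A' Z a)
      = (∑ i, ent p (fun ω => (A' i ω, Z ω))) + (1 - (k : ℝ)) * ent p Z := by
  classical
  have hlog : ∀ a, prob p (fun ω => (fun j => A' j ω, Z ω) = a) * Real.log (Q p k A' Z a)
      = prob p (fun ω => (fun j => A' j ω, Z ω) = a)
          * ((∑ i, Real.log (prob p (fun ω => (A' i ω, Z ω) = (a.1 i, a.2))))
             + Real.log (prob p (fun ω => Z ω = a.2))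
             - (k : ℝ) * Real.log (prob p (fun ω => Z ω = a.2))) := by
    intro a
    rcases eq_or_lt_of_le (prob_nonneg hp (fun ω => (fun j => A' j ω, Z ω) = a)) with h | h
    · rw [← h, zero_mul, zero_mul]
    · have hz : 0 < prob p (fun ω => Z ω = a.2) := lt_of_lt_of_le h (r_le_rz p k A' Z hp a)
      have hri : ∀ i, 0 < prob p (fun ω => (A' i ω, Z ω) = (a.1 i, a.2)) :=
        fun i => lt_of_lt_of_le h (r_le_ri p k A' Z hp a i)
      congr 1
      unfold Q
      have hprod : 0 < ∏ i, prob p (fun ω => (A' i ω, Z ω) = (a.1 i, a.2)) :=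
        Finset.prod_pos fun i _ => hri i
      rw [if_neg (ne_of_gt hz), Real.log_div (ne_of_gt (mul_pos hprod hz)) (pow_ne_zero k (ne_of_gt hz)),
        Real.log_mul (ne_of_gt hprod) (ne_of_gt hz),
        Real.log_prod (fun i _ => ne_of_gt (hri i)), Real.log_pow]
  rw [Finset.sum_congr rfl fun a _ => hlog a]
  have e1 : ∑ a, prob p (fun ω => (fun j => A' j ω, Z ω) = a)
        * ∑ i, Real.log (prob p (fun ω => (A' i ω, Z ω) = (a.1 i, a.2)))
      = ∑ i, -ent p (fun ω => (A' i ω, Z ω)) := by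
    rw [Finset.sum_congr rfl fun a (_ : a ∈ Finset.univ) => Finset.mul_sum
        Finset.univ
        (fun i => Real.log (prob p (fun ω => (A' i ω, Z ω) = (a.1 i, a.2))))
        (prob p (fun ω => (fun j => A' j ω, Z ω) = a)),
      Finset.sum_comm]
    refine Finset.sum_congr rfl fun i _ => ?_
    exact cross_ent p (fun ω => (fun j => A' j ω, Z ω)) (fun x => (x.1 i, x.2))
  have e2 : ∑ a, prob p (fun ω => (fun j => A' j ω, Z ω) = a)
        * Real.log (prob p (fun ω => Z ω = a.2)) = -ent p Z := by
    exact cross_ent p (fun ω => (fun j => A' j ω, Z ω)) Prod.snd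
  have expand : ∀ a, prob p (fun ω => (fun j => A' j ω, Z ω) = a)
          * ((∑ i, Real.log (prob p (fun ω => (A' i ω, Z ω) = (a.1 i, a.2))))
             + Real.log (prob p (fun ω => Z ω = a.2))
             - (k : ℝ) * Real.log (prob p (fun ω => Z ω = a.2)))
      = prob p (fun ω => (fun j => A' j ω, Z ω) = a)
          * (∑ i, Real.log (prob p (fun ω => (A' i ω, Z ω) = (a.1 i, a.2))))
        + prob p (fun ω => (fun j => A' j ω, Z ω) = a)
          * Real.log (prob p (fun ω => Z ω = a.2))
        - (k : ℝ) * (prob p (fun ω => (fun j => A' j ω, Z ω) = a)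
          * Real.log (prob p (fun ω => Z ω = a.2))) := fun a => by ring
  rw [Finset.sum_congr rfl fun a _ => expand a, Finset.sum_sub_distrib,
    Finset.sum_add_distrib, ← Finset.mul_sum, e1, e2]
  simp only [Finset.sum_neg_distrib]
  ring

end Core



section Core2

variable {Ω V U : Type} [Fintype Ω] [Fintype V] [Fintype U]
variable (p : Ω → ℝ) (k : ℕ) (A' : Fin k → Ω → U) (Z : Ω → V)

lemma core_le (hp : ∀ ω, 0 ≤ p ω) (hp1 : ∑ ω, p ω = 1) :
    ent p (fun ω => ((fun i => A' i ω), Z ω))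
      ≤ (∑ i, ent p (fun ω => (A' i ω, Z ω))) + (1 - (k : ℝ)) * ent p Z := by
  have hg := gibbs (fun a => prob p (fun ω => (fun j => A' j ω, Z ω) = a)) (Q p k A' Z)
    (fun a => prob_nonneg hp _) (sum_prob_eq p hp1 _) (Q_nonneg p k A' Z hp)
    (Q_sum_le p k A' Z hp hp1) (Q_pos p k A' Z hp)
  rw [crossQ p k A' Z hp] at hg
  exact hg

lemma core_eq (hp : ∀ ω, 0 ≤ p ω) (hp1 : ∑ ω, p ω = 1)
    (hfac : ∀ (as : Fin k → U) (z : V),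
      prob p (fun ω => (fun j => A' j ω, Z ω) = (as, z)) * prob p (fun ω => Z ω = z) ^ k
        = prob p (fun ω => Z ω = z) * ∏ i, prob p (fun ω => (A' i ω, Z ω) = (as i, z))) :
    ent p (fun ω => ((fun i => A' i ω), Z ω))
      = (∑ i, ent p (fun ω => (A' i ω, Z ω))) + (1 - (k : ℝ)) * ent p Z := by
  have hQr : ∀ a : (Fin k → U) × V,
      prob p (fun ω => (fun j => A' j ω, Z ω) = a) * Real.log (prob p (fun ω => (fun j => A' j ω, Z ω) = a))
        = prob p (fun ω => (fun j => A' j ω, Z ω) = a) * Real.log (Q p k A' Z a) := by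
    intro a
    rcases eq_or_lt_of_le (prob_nonneg hp (fun ω => (fun j => A' j ω, Z ω) = a)) with h | h
    · rw [← h, zero_mul, zero_mul]
    · have hz : 0 < prob p (fun ω => Z ω = a.2) := lt_of_lt_of_le h (r_le_rz p k A' Z hp a)
      have hf := hfac a.1 a.2
      rw [Prod.mk.eta] at hf
      have hQ : Q p k A' Z a = prob p (fun ω => (fun j => A' j ω, Z ω) = a) := by
        unfold Q
        rw [if_neg (ne_of_gt hz)]
        have hnum : (∏ i, prob p (fun ω => (A' i ω, Z ω) = (a.1 i, a.2)))
            * prob p (fun ω => Z ω = a.2)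
            = prob p (fun ω => (fun j => A' j ω, Z ω) = a) * prob p (fun ω => Z ω = a.2) ^ k := by
          rw [mul_comm]
          exact hf.symm
        rw [hnum, mul_div_assoc, div_self (pow_ne_zero k (ne_of_gt hz)), mul_one]
      rw [hQ]
  rw [← crossQ p k A' Z hp]
  show -∑ a, prob p (fun ω => (fun j => A' j ω, Z ω) = a)
      * Real.log (prob p (fun ω => (fun j => A' j ω, Z ω) = a)) = _
  rw [Finset.sum_congr rfl fun a _ => hQr a]

end Core2


theorem stmt11 {Ω S T U : Type} [Fintype Ω] [Fintype S] [Fintype T] [Fintype U]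
    (p : Ω → ℝ) (hp : ∀ ω, 0 ≤ p ω) (hp1 : ∑ ω, p ω = 1)
    (X : Ω → S) (Y : Ω → T) (A : Ω → U) (k : ℕ) (A' : Fin k → Ω → U)
    -- each (X,Y,A'_i) is distributed as (X,Y,A)
    (hdist : ∀ i x y a, prob p (fun ω => X ω = x ∧ Y ω = y ∧ A' i ω = a)
                      = prob p (fun ω => X ω = x ∧ Y ω = y ∧ A ω = a))
    -- A'_1,…,A'_k, A are mutually conditionally independent given (X,Y)
    (hci : ∀ x y (as : Fin k → U) (a : U),
        prob p (fun ω => X ω = x ∧ Y ω = y ∧ (∀ i, A' i ω = as i) ∧ A ω = a)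
          * (prob p (fun ω => X ω = x ∧ Y ω = y)) ^ k
        = prob p (fun ω => X ω = x ∧ Y ω = y ∧ A ω = a)
          * ∏ i, prob p (fun ω => X ω = x ∧ Y ω = y ∧ A' i ω = as i)) :
    condEnt p (fun ω (i : Fin k) => A' i ω) X ≤ k * condEnt p A X ∧
    condEnt p (fun ω (i : Fin k) => A' i ω) (fun ω => (X ω, Y ω))
      = k * condEnt p A (fun ω => (X ω, Y ω)) ∧
    cmi p (fun ω (i : Fin k) => A' i ω) Y X ≤ k * cmi p A Y X := by
  classical
  -- Step A: each (A'_i, X) is distributed as (A, X)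
  have stepA : ∀ i, ent p (fun ω => (A' i ω, X ω)) = ent p (fun ω => (A ω, X ω)) := by
    intro i
    refine ent_congr fun s => ?_
    rw [← prob_sum_and p (fun ω => (A' i ω, X ω) = s) Y,
        ← prob_sum_and p (fun ω => (A ω, X ω) = s) Y]
    refine Finset.sum_congr rfl fun y _ => ?_
    calc prob p (fun ω => (A' i ω, X ω) = s ∧ Y ω = y)
        = prob p (fun ω => X ω = s.2 ∧ Y ω = y ∧ A' i ω = s.1) := by
          refine prob_congr fun ω => ?_
          simp only [Prod.ext_iff]
          tauto
      _ = prob p (fun ω => X ω = s.2 ∧ Y ω = y ∧ A ω = s.1) := hdist i s.2 y s.1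
      _ = prob p (fun ω => (A ω, X ω) = s ∧ Y ω = y) := by
          refine prob_congr fun ω => ?_
          simp only [Prod.ext_iff]
          tauto
  -- Step B: each (A'_i, (X,Y)) is distributed as (A, (X,Y))
  have stepB : ∀ i, ent p (fun ω => (A' i ω, (X ω, Y ω)))
      = ent p (fun ω => (A ω, (X ω, Y ω))) := by
    intro i
    refine ent_congr fun s => ?_
    calc prob p (fun ω => (A' i ω, (X ω, Y ω)) = s)
        = prob p (fun ω => X ω = s.2.1 ∧ Y ω = s.2.2 ∧ A' i ω = s.1) := by
          refine prob_congr fun ω => ?_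
          simp only [Prod.ext_iff]
          tauto
      _ = prob p (fun ω => X ω = s.2.1 ∧ Y ω = s.2.2 ∧ A ω = s.1) := hdist i s.2.1 s.2.2 s.1
      _ = prob p (fun ω => (A ω, (X ω, Y ω)) = s) := by
          refine prob_congr fun ω => ?_
          simp only [Prod.ext_iff]
          tauto
  -- sums of per-coordinate entropies
  have sumA : (∑ i, ent p (fun ω => (A' i ω, X ω))) = (k : ℝ) * ent p (fun ω => (A ω, X ω)) := by
    rw [Finset.sum_congr rfl fun i _ => stepA i, Finset.sum_const, Finset.card_univ,
      Fintype.card_fin, nsmul_eq_mul]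
  have sumB : (∑ i, ent p (fun ω => (A' i ω, (X ω, Y ω))))
      = (k : ℝ) * ent p (fun ω => (A ω, (X ω, Y ω))) := by
    rw [Finset.sum_congr rfl fun i _ => stepB i, Finset.sum_const, Finset.card_univ,
      Fintype.card_fin, nsmul_eq_mul]
  -- factorization hypothesis for Z = (X,Y)
  have hfac : ∀ (as : Fin k → U) (z : S × T),
      prob p (fun ω => (fun j => A' j ω, (X ω, Y ω)) = (as, z))
          * prob p (fun ω => (X ω, Y ω) = z) ^ k
        = prob p (fun ω => (X ω, Y ω) = z)
          * ∏ i, prob p (fun ω => (A' i ω, (X ω, Y ω)) = (as i, z)) := by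
    rintro as ⟨x, y⟩
    have hs := Finset.sum_congr rfl fun a (_ : a ∈ (Finset.univ : Finset U)) => hci x y as a
    rw [← Finset.sum_mul, ← Finset.sum_mul] at hs
    have m1 : ∑ a, prob p (fun ω => X ω = x ∧ Y ω = y ∧ (∀ i, A' i ω = as i) ∧ A ω = a)
        = prob p (fun ω => (fun j => A' j ω, (X ω, Y ω)) = (as, (x, y))) := by
      rw [← prob_sum_and p (fun ω => (fun j => A' j ω, (X ω, Y ω)) = (as, (x, y))) A]
      refine Finset.sum_congr rfl fun a _ => prob_congr fun ω => ?_
      simp only [Prod.ext_iff, funext_iff]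
      tauto
    have m2 : ∑ a, prob p (fun ω => X ω = x ∧ Y ω = y ∧ A ω = a)
        = prob p (fun ω => (X ω, Y ω) = (x, y)) := by
      rw [← prob_sum_and p (fun ω => (X ω, Y ω) = (x, y)) A]
      refine Finset.sum_congr rfl fun a _ => prob_congr fun ω => ?_
      simp only [Prod.ext_iff]
      tauto
    have m3 : prob p (fun ω => X ω = x ∧ Y ω = y) = prob p (fun ω => (X ω, Y ω) = (x, y)) := by
      refine prob_congr fun ω => ?_
      simp only [Prod.ext_iff]
    have m4 : ∀ i, prob p (fun ω => X ω = x ∧ Y ω = y ∧ A' i ω = as i)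
        = prob p (fun ω => (A' i ω, (X ω, Y ω)) = (as i, (x, y))) := by
      intro i
      refine prob_congr fun ω => ?_
      simp only [Prod.ext_iff]
      tauto
    rw [m1, m2, m3] at hs
    rw [hs]
    exact congrArg _ (Finset.prod_congr rfl fun i _ => m4 i)
  -- the three parts
  have hcore1 := core_le p k A' X hp hp1
  have hcore2 := core_eq p k A' (fun ω => (X ω, Y ω)) hp hp1 hfac
  rw [sumA] at hcore1
  rw [sumB] at hcore2
  -- abbreviations
  set eFX := ent p (fun ω => ((fun i => A' i ω), X ω)) with heFX
  set eFXY := ent p (fun ω => ((fun i => A' i ω), (X ω, Y ω))) with heFXY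
  set eAX := ent p (fun ω => (A ω, X ω)) with heAX
  set eAXY := ent p (fun ω => (A ω, (X ω, Y ω))) with heAXY
  set eX := ent p X with heX
  set eXY := ent p (fun ω => (X ω, Y ω)) with heXY
  have part1 : condEnt p (fun ω (i : Fin k) => A' i ω) X ≤ (k : ℝ) * condEnt p A X := by
    show eFX - eX ≤ (k : ℝ) * (eAX - eX)
    have : (k : ℝ) * (eAX - eX) = (k : ℝ) * eAX - (k : ℝ) * eX := by ring
    rw [this]
    have h1 : (1 - (k : ℝ)) * eX = eX - (k : ℝ) * eX := by ring
    linarith [hcore1, h1]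
  have part2 : condEnt p (fun ω (i : Fin k) => A' i ω) (fun ω => (X ω, Y ω))
      = (k : ℝ) * condEnt p A (fun ω => (X ω, Y ω)) := by
    show eFXY - eXY = (k : ℝ) * (eAXY - eXY)
    have : (k : ℝ) * (eAXY - eXY) = (k : ℝ) * eAXY - (k : ℝ) * eXY := by ring
    rw [this]
    have h1 : (1 - (k : ℝ)) * eXY = eXY - (k : ℝ) * eXY := by ring
    linarith [hcore2, h1]
  refine ⟨part1, part2, ?_⟩
  -- part 3: swap lemmas
  have swYX : ent p (fun ω => (Y ω, X ω)) = eXY :=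
    ent_comp_inj p (fun ω => (X ω, Y ω)) Prod.swap Prod.swap_injective
  have swA' : ent p (fun ω => ((fun i => A' i ω), (Y ω, X ω))) = eFXY := by
    refine ent_comp_inj p (fun ω => ((fun i => A' i ω), (X ω, Y ω)))
      (fun q => (q.1, q.2.2, q.2.1)) ?_
    rintro ⟨a, x, y⟩ ⟨b, x', y'⟩ h
    simp only [Prod.ext_iff] at h ⊢
    tauto
  have swA : ent p (fun ω => (A ω, (Y ω, X ω))) = eAXY := by
    refine ent_comp_inj p (fun ω => (A ω, (X ω, Y ω)))
      (fun q => (q.1, q.2.2, q.2.1)) ?_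
    rintro ⟨a, x, y⟩ ⟨b, x', y'⟩ h
    simp only [Prod.ext_iff] at h ⊢
    tauto
  show eFX + ent p (fun ω => (Y ω, X ω)) - ent p (fun ω => ((fun i => A' i ω), (Y ω, X ω))) - eX
      ≤ (k : ℝ) * (eAX + ent p (fun ω => (Y ω, X ω)) - ent p (fun ω => (A ω, (Y ω, X ω))) - eX)
  rw [swYX, swA', swA]
  have hexp : (k : ℝ) * (eAX + eXY - eAXY - eX)
      = (k : ℝ) * eAX + (k : ℝ) * eXY - (k : ℝ) * eAXY - (k : ℝ) * eX := by ring
  rw [hexp]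
  have h1 : (1 - (k : ℝ)) * eX = eX - (k : ℝ) * eX := by ring
  have h2 : (1 - (k : ℝ)) * eXY = eXY - (k : ℝ) * eXY := by ring
  linarith [hcore1, hcore2, h1, h2]


end PaperIngleton
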